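/- Let A be a δ_p-ring and I a δ_p-ideal such that A is classically (I,p)-complete and all powers I^m are closed in the p-adic topology. Then the quotient map A → A/I² induces an isomorphism on rank 1 units: G_m^{δ_p}(A) ≅ G_m^{δ_p}(A/I²). -/

import Mathlib

/-- A `δ_p`-ring: a commutative ring `A` with an operation `δ : A → A` satisfying
`δ 0 = δ 1 = 0`, the additive identity
`δ (x+y) = δ x + δ y + (x^p + y^p - (x+y)^p)/p`
(written with the exact integer coefficients `(p.choose i)/p` for `0 < i < p`),
and the multiplicative identity
`δ (x*y) = x^p δ y + y^p δ x + p δ x δ y`. -/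
structure DeltaRing (p : ℕ) (A : Type*) [CommRing A] where
  δ : A → A
  delta_zero : δ 0 = 0
  delta_one : δ 1 = 0
  delta_add : ∀ x y : A, δ (x + y) = δ x + δ y -
      ∑ i ∈ Finset.Ioo 0 p, ((p.choose i / p : ℕ) : A) * x ^ i * y ^ (p - i)
  delta_mul : ∀ x y : A,
      δ (x * y) = x ^ p * δ y + y ^ p * δ x + (p : A) * δ x * δ y


namespace DeltaAux

open Ideal Submodule

variable {p : ℕ} {A : Type*} [CommRing A]


open Ideal Submodule

variable {p : ℕ} {A : Type*} [CommRing A]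

theorem delta_add_defect (D : DeltaRing p A) (x y : A) :
    D.δ (x + y) - D.δ x - D.δ y ∈ Ideal.span {x * y} := by
  rw [D.delta_add]
  rw [show D.δ x + D.δ y -
      (∑ i ∈ Finset.Ioo 0 p, ((p.choose i / p : ℕ) : A) * x ^ i * y ^ (p - i)) - D.δ x - D.δ y
      = - ∑ i ∈ Finset.Ioo 0 p, ((p.choose i / p : ℕ) : A) * x ^ i * y ^ (p - i) from by ring]
  refine neg_mem (Ideal.sum_mem _ fun i hi => ?_)
  rw [Finset.mem_Ioo] at hi
  refine Ideal.mem_span_singleton.mpr ?_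
  have h1 : x ∣ x ^ i := dvd_pow_self x (by omega)
  have h2 : y ∣ y ^ (p - i) := dvd_pow_self y (by omega)
  rw [mul_assoc]
  exact (mul_dvd_mul h1 h2).mul_left _

theorem delta_one_add_defect (hp : p.Prime) (D : DeltaRing p A) (x : A) :
    D.δ (1 + x) - D.δ x + x ∈ Ideal.span {x * x} := by
  rw [D.delta_add, D.delta_one]
  have hmem : (p - 1) ∈ Finset.Ioo 0 p := by
    rw [Finset.mem_Ioo]; have := hp.two_le; omega
  rw [← Finset.sum_erase_add _ _ hmem]
  have hc : ((p.choose (p - 1) / p : ℕ) : A) = 1 := by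
    rw [Nat.choose_symm hp.one_lt.le, Nat.choose_one_right, Nat.div_self hp.pos, Nat.cast_one]
  have hexp : p - (p - 1) = 1 := by have := hp.two_le; omega
  rw [hexp, hc]
  rw [show (0 : A) + D.δ x -
      ((∑ i ∈ (Finset.Ioo 0 p).erase (p - 1), ((p.choose i / p : ℕ) : A) * 1 ^ i * x ^ (p - i))
        + 1 * 1 ^ (p - 1) * x ^ 1) - D.δ x + x
      = - ∑ i ∈ (Finset.Ioo 0 p).erase (p - 1), ((p.choose i / p : ℕ) : A) * 1 ^ i * x ^ (p - i)
      from by ring]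
  refine neg_mem (Ideal.sum_mem _ fun i hi => ?_)
  rw [Finset.mem_erase, Finset.mem_Ioo] at hi
  refine Ideal.mem_span_singleton.mpr ?_
  have h1 : x * x ∣ x ^ (p - i) := by
    rw [← pow_two]
    exact pow_dvd_pow x (by omega)
  exact h1.mul_left _

theorem phi_p_pow (hp : p.Prime) (D : DeltaRing p A) (k : ℕ) :
    ((p : A) ^ k) ^ p + (p : A) * D.δ ((p : A) ^ k)
      = (p : A) ^ k * ((p : A) ^ (p - 1) + D.δ (p : A)) ^ k := by
  induction k with
  | zero => simp [D.delta_one]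
  | succ k ih =>
    have hmul := D.delta_mul ((p : A)) ((p : A) ^ k)
    have hpp : (p : A) ^ p = (p : A) * (p : A) ^ (p - 1) := by
      rw [← pow_succ']
      congr 1
      have := hp.two_le; omega
    rw [pow_succ']
    linear_combination (norm := ring_nf) (p : A) * hmul + ((p : A) ^ p + (p : A) * D.δ (p : A)) * ih +
      ((p : A) ^ k * ((p : A) ^ (p - 1) + D.δ (p : A)) ^ k) * hpp


theorem mul_mem_pow {I : Ideal A} {a b : A} {s t u : ℕ} (hu : u ≤ s + t)
    (ha : a ∈ I ^ s) (hb : b ∈ I ^ t) : a * b ∈ I ^ u :=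
  Ideal.pow_le_pow_right hu (by rw [pow_add]; exact Ideal.mul_mem_mul ha hb)

theorem pow_mem_pow' {I : Ideal A} {a : A} {s e u : ℕ} (hu : u ≤ s * e) (ha : a ∈ I ^ s) :
    a ^ e ∈ I ^ u :=
  Ideal.pow_le_pow_right hu (by rw [pow_mul]; exact Ideal.pow_mem_pow ha e)

/-- The target ideal for `δ` on `I^n`. -/
def Kd (p : ℕ) (I : Ideal A) : ℕ → Ideal A
  | 0 => ⊤
  | 1 => I
  | (n+2) => I ^ (n+3) ⊔ Ideal.span {(p : A)} * I ^ (n+2)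

theorem Kd_le (I : Ideal A) : ∀ n : ℕ, 1 ≤ n → Kd p I n ≤ I ^ n
  | 1, _ => by rw [pow_one]; exact le_rfl
  | (n+2), _ => sup_le (Ideal.pow_le_pow_right (by omega)) Ideal.mul_le_right

theorem sq_le_Kd (I : Ideal A) : ∀ n : ℕ, I ^ (n + n) ≤ Kd p I n
  | 0 => le_top
  | 1 => Ideal.pow_le_self two_ne_zero
  | (n+2) => le_sup_of_le_left (Ideal.pow_le_pow_right (by omega))

theorem delta_mem_Kd (hp : p.Prime) (D : DeltaRing p A) (I : Ideal A)
    (hδ : ∀ a ∈ I, D.δ a ∈ I) :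
    ∀ (n : ℕ) (x : A), x ∈ I ^ n → D.δ x ∈ Kd p I n := by
  intro n x hx
  induction hx using Submodule.pow_induction_on_left' with
  | algebraMap r => exact Submodule.mem_top
  | add x y i hx hy ihx ihy =>
    have hd := delta_add_defect D x y
    have hxy : x * y ∈ Kd p I i := sq_le_Kd I i (mul_mem_pow le_rfl hx hy)
    have hsp : Ideal.span {x * y} ≤ Kd p I i := (Ideal.span_singleton_le_iff_mem _).mpr hxy
    rw [show D.δ (x + y) = (D.δ (x + y) - D.δ x - D.δ y) + D.δ x + D.δ y from by ring]
    exact add_mem (add_mem (hsp hd) ihx) ihy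
  | mem_mul a ha i x hx ih =>
    rw [D.delta_mul]
    have hp2 := hp.two_le
    match i, hx, ih with
    | 0, hx, ih =>
      show _ ∈ I
      refine add_mem (add_mem ?_ ?_) ?_
      · exact Ideal.mul_mem_right _ _ (Ideal.pow_mem_of_mem I ha p hp.pos)
      · exact Ideal.mul_mem_left _ _ (hδ a ha)
      · exact Ideal.mul_mem_right _ _ (Ideal.mul_mem_left _ _ (hδ a ha))
    | 1, hx, ih =>
      show _ ∈ I ^ 3 ⊔ Ideal.span {(p : A)} * I ^ 2
      rw [pow_one] at hx
      refine add_mem (add_mem ?_ ?_) ?_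
      · refine Submodule.mem_sup_left (mul_mem_pow (u := 3) (s := p) (t := 1) (by omega)
          (Ideal.pow_mem_pow ha p) ?_)
        show D.δ x ∈ I ^ 1
        rw [pow_one]; exact ih
      · exact Submodule.mem_sup_left (mul_mem_pow (u := 3) (s := p) (t := 1) (by omega)
          (Ideal.pow_mem_pow hx p) (by rw [pow_one]; exact hδ a ha))
      · refine Submodule.mem_sup_right ?_
        rw [mul_assoc]
        exact Ideal.mul_mem_mul (Ideal.mem_span_singleton_self _)
          (mul_mem_pow (u := 2) (s := 1) (t := 1) le_rfl (by rw [pow_one]; exact hδ a ha)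
            (by rw [pow_one]; exact ih))
    | (n+2), hx, ih =>
      show _ ∈ I ^ (n+4) ⊔ Ideal.span {(p : A)} * I ^ (n+3)
      obtain ⟨u, hu, v, hv, huv⟩ := Submodule.mem_sup.mp ih
      obtain ⟨z, hz, hzv⟩ := Ideal.mem_span_singleton_mul.mp hv
      have hδa := hδ a ha
      have hδx : D.δ x = u + (p : A) * z := by rw [hzv, huv]
      have key : a ^ p * D.δ x + x ^ p * D.δ a + (p : A) * D.δ a * D.δ x
          = (a ^ p * u + x ^ p * D.δ a + (p : A) * (D.δ a * u))
            + ((p : A) * (a ^ p * z) + (p : A) * ((p : A) * (D.δ a * z))) := by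
        rw [hδx]; ring
      rw [key]
      refine add_mem (Submodule.mem_sup_left ?_) (Submodule.mem_sup_right ?_)
      · refine add_mem (add_mem ?_ ?_) ?_
        · exact mul_mem_pow (s := p) (t := n+3) (by omega) (Ideal.pow_mem_pow ha p) hu
        · exact mul_mem_pow (s := (n+2)*p) (t := 1) (by nlinarith) (pow_mem_pow' le_rfl hx)
            (by rw [pow_one]; exact hδa)
        · exact Ideal.mul_mem_left _ _ (mul_mem_pow (s := 1) (t := n+3) (by omega)
            (by rw [pow_one]; exact hδa) hu)
      · refine add_mem ?_ ?_
        · exact Ideal.mul_mem_mul (Ideal.mem_span_singleton_self _)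
            (mul_mem_pow (s := p) (t := n+2) (by omega) (Ideal.pow_mem_pow ha p) hz)
        · exact Ideal.mul_mem_mul (Ideal.mem_span_singleton_self _)
            (Ideal.mul_mem_left _ _ (mul_mem_pow (s := 1) (t := n+2) (by omega)
              (by rw [pow_one]; exact hδa) hz))


theorem delta_scaled (hp : p.Prime) (D : DeltaRing p A) (I : Ideal A)
    (hδ : ∀ a ∈ I, D.δ a ∈ I) (m0 k : ℕ) {x : A}
    (hx : x ∈ Ideal.span {(p : A) ^ k} * I ^ (m0+2) ⊔ I ^ (m0+3)) :
    D.δ x ∈ Ideal.span {(p : A) ^ (k+1)} * I ^ (m0+2) ⊔ I ^ (m0+3) := by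
  rw [Submodule.mem_sup] at hx
  obtain ⟨s, hs, i, hi, rfl⟩ := hx
  obtain ⟨c, hc, rfl⟩ := Ideal.mem_span_singleton_mul.mp hs
  have hδc : D.δ c ∈ Kd p I (m0+2) := delta_mem_Kd hp D I hδ (m0+2) c hc
  obtain ⟨u, hu, v, hv, huv⟩ := Submodule.mem_sup.mp hδc
  obtain ⟨z, hz, hzv⟩ := Ideal.mem_span_singleton_mul.mp hv
  have hδceq : D.δ c = u + (p : A) * z := by rw [hzv, huv]
  have hw := phi_p_pow hp D k
  set w : A := ((p : A) ^ (p - 1) + D.δ (p : A)) ^ k with hwdef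
  have hδs : D.δ ((p : A) ^ k * c)
      = ((p : A) ^ k * w) * u + ((p : A) ^ (k+1)) * (w * z) + c ^ p * D.δ ((p : A) ^ k) := by
    rw [D.delta_mul, hδceq]
    linear_combination (u + (p : A) * z) * hw
  have hdef := delta_add_defect D ((p : A) ^ k * c) i
  have hdefI : D.δ ((p : A) ^ k * c + i) - D.δ ((p : A) ^ k * c) - D.δ i ∈ I ^ (m0+3) := by
    refine (Ideal.span_singleton_le_iff_mem _).mpr ?_ hdef
    exact Ideal.mul_mem_left _ _ hi
  have hδiI : D.δ i ∈ I ^ (m0+3) :=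
    Kd_le I (m0+3) (by omega) (delta_mem_Kd hp D I hδ (m0+3) i hi)
  have hcp : c ^ p * D.δ ((p : A) ^ k) ∈ I ^ (m0+3) :=
    Ideal.mul_mem_right _ _ (pow_mem_pow' (by nlinarith [hp.two_le]) hc)
  refine Submodule.mem_sup.mpr ⟨(p : A) ^ (k+1) * (w * z), ?_, ?_, ?_, ?_⟩
  · exact Ideal.mul_mem_mul (Ideal.mem_span_singleton_self _) (Ideal.mul_mem_left _ _ hz)
  · exact (D.δ ((p : A) ^ k * c + i) - D.δ ((p : A) ^ k * c) - D.δ i) + D.δ i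
      + ((p : A) ^ k * w) * u + c ^ p * D.δ ((p : A) ^ k)
  · exact add_mem (add_mem (add_mem hdefI hδiI) (Ideal.mul_mem_left _ _ hu)) hcp
  · linear_combination -hδs

/-- `δ` drops the `(I,p)`-adic filtration by at most one. -/
theorem delta_mem_JP (hp : p.Prime) (D : DeltaRing p A) (I : Ideal A) :
    ∀ (n : ℕ) (x : A), x ∈ (I ⊔ Ideal.span {(p : A)}) ^ n →
      D.δ x ∈ (I ⊔ Ideal.span {(p : A)}) ^ (n - 1) := by
  set JP := I ⊔ Ideal.span {(p : A)} with hJP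
  intro n x hx
  induction hx using Submodule.pow_induction_on_left' with
  | algebraMap r =>
    simp only [Nat.zero_sub, pow_zero, Ideal.one_eq_top]
    exact Submodule.mem_top
  | add x y i hx hy ihx ihy =>
    have hd := delta_add_defect D x y
    have hxy : x * y ∈ JP ^ (i - 1) :=
      Ideal.pow_le_pow_right (by omega) (mul_mem_pow (u := i + i) le_rfl hx hy)
    rw [show D.δ (x + y) = (D.δ (x + y) - D.δ x - D.δ y) + D.δ x + D.δ y from by ring]
    exact add_mem (add_mem ((Ideal.span_singleton_le_iff_mem _).mpr hxy hd) ihx) ihy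
  | mem_mul a ha i x hx ih =>
    have hsle : JP ^ (1 + (i - 1)) ≤ JP ^ i := Ideal.pow_le_pow_right (by omega)
    have h1 : a * D.δ x ∈ JP ^ i := by
      refine hsle ?_
      rw [pow_add, pow_one]
      exact Ideal.mul_mem_mul ha ih
    have h2 : (p : A) * D.δ x ∈ JP ^ i := by
      refine hsle ?_
      rw [pow_add, pow_one]
      exact Ideal.mul_mem_mul (Submodule.mem_sup_right (Ideal.mem_span_singleton_self _)) ih
    rw [D.delta_mul, show i + 1 - 1 = i from rfl]
    refine add_mem (add_mem ?_ ?_) ?_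
    · rw [show a ^ p * D.δ x = a ^ (p - 1) * (a * D.δ x) from by
        rw [← mul_assoc, ← pow_succ, Nat.sub_add_cancel hp.one_le]]
      exact Ideal.mul_mem_left _ _ h1
    · exact Ideal.mul_mem_right _ _ (pow_mem_pow' (Nat.le_mul_of_pos_right i hp.pos) hx)
    · rw [show (p : A) * D.δ a * D.δ x = D.δ a * ((p : A) * D.δ x) from by ring]
      exact Ideal.mul_mem_left _ _ h2

theorem JP_pow_le (I : Ideal A) (a b N : ℕ) (h : a + b ≤ N) :
    (I ⊔ Ideal.span {(p : A)}) ^ N ≤ I ^ a ⊔ Ideal.span {(p : A)} ^ b :=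
  le_trans (Ideal.pow_le_pow_right h) Ideal.sup_pow_add_le_pow_sup_pow

theorem limit_exists {I : Ideal A} (hcomplete : IsAdicComplete (I ⊔ Ideal.span {(p : A)}) A)
    {f : ℕ → A} (hf : ∀ {a b : ℕ}, a ≤ b → f b - f a ∈ (I ⊔ Ideal.span {(p : A)}) ^ a) :
    ∃ L : A, ∀ n, L - f n ∈ (I ⊔ Ideal.span {(p : A)}) ^ n := by
  obtain ⟨L, hL⟩ := hcomplete.toIsPrecomplete.prec (f := f) (by
    intro a b hab
    rw [SModEq.sub_mem, Ideal.smul_eq_mul, Ideal.mul_top]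
    simpa using neg_mem (hf hab))
  refine ⟨L, fun n => ?_⟩
  have := hL n
  rw [SModEq.sub_mem, Ideal.smul_eq_mul, Ideal.mul_top] at this
  simpa using neg_mem this

theorem eq_zero_of_mem_all {I : Ideal A} (hcomplete : IsAdicComplete (I ⊔ Ideal.span {(p : A)}) A)
    {x : A} (hx : ∀ n, x ∈ (I ⊔ Ideal.span {(p : A)}) ^ n) : x = 0 :=
  hcomplete.toIsHausdorff.haus x fun n => by
    rw [SModEq.zero, Ideal.smul_eq_mul, Ideal.mul_top]; exact hx n


theorem solver (hp : p.Prime) (D : DeltaRing p A) (I : Ideal A)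
    (hδ : ∀ a ∈ I, D.δ a ∈ I)
    (hcomplete : IsAdicComplete (I ⊔ Ideal.span {(p : A)}) A)
    (hclosed : ∀ (m : ℕ) (x : A),
      (∀ n : ℕ, ∃ y ∈ I ^ m, x - y ∈ Ideal.span {(p : A)} ^ n) → x ∈ I ^ m)
    (m0 : ℕ) (c : A) (hc : c ∈ I ^ (m0+2)) :
    ∃ x ∈ I ^ (m0+2), x - D.δ x - c ∈ I ^ (m0+3) := by
  set JP := I ⊔ Ideal.span {(p : A)} with hJP
  have hstep : ∀ (k : ℕ) (d : A), ∃ d' : A, d ∈ Ideal.span {(p : A) ^ k} * I ^ (m0+2) →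
      d' ∈ Ideal.span {(p : A) ^ (k+1)} * I ^ (m0+2) ∧ D.δ d - d' ∈ I ^ (m0+3) := by
    intro k d
    by_cases hd : d ∈ Ideal.span {(p : A) ^ k} * I ^ (m0+2)
    · have h := delta_scaled hp D I hδ m0 k (Submodule.mem_sup_left hd)
      obtain ⟨y, hy, z, hz, hyz⟩ := Submodule.mem_sup.mp h
      exact ⟨y, fun _ => ⟨hy, by rw [show D.δ d - y = z from by linear_combination -hyz]; exact hz⟩⟩
    · exact ⟨0, fun h => absurd h hd⟩
  choose F hF using hstep
  set d : ℕ → A := fun k => Nat.rec c (fun k dk => F k dk) k with hddef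
  have hd0 : d 0 = c := rfl
  have hdsucc : ∀ k, d (k+1) = F k (d k) := fun k => rfl
  have hdmem : ∀ k, d k ∈ Ideal.span {(p : A) ^ k} * I ^ (m0+2) := by
    intro k; induction k with
    | zero =>
      rw [hd0]
      simpa [pow_zero, Ideal.span_singleton_one, Ideal.top_mul] using hc
    | succ k ih =>
      rw [hdsucc]
      exact (hF k (d k) ih).1
  have hddelta : ∀ k, D.δ (d k) - d (k+1) ∈ I ^ (m0+3) := by
    intro k
    rw [hdsucc]
    exact (hF k (d k) (hdmem k)).2
  have hdI : ∀ k, d k ∈ I ^ (m0+2) := fun k => Ideal.mul_le_right (hdmem k)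
  have hdP : ∀ k, d k ∈ Ideal.span {(p : A)} ^ k := fun k => by
    rw [Ideal.span_singleton_pow]
    exact Ideal.mul_le_left (hdmem k)
  set s : ℕ → A := fun n => Nat.rec 0 (fun n sn => sn + d n) n with hsdef
  have hssucc : ∀ n, s (n+1) = s n + d n := fun n => rfl
  have hsI : ∀ n, s n ∈ I ^ (m0+2) := by
    intro n; induction n with
    | zero => exact zero_mem _
    | succ n ih => rw [hssucc]; exact add_mem ih (hdI n)
  have hcauchy : ∀ {a b : ℕ}, a ≤ b → s b - s a ∈ JP ^ a := by
    intro a b hab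
    induction b, hab using Nat.le_induction with
    | base => simpa using zero_mem (JP ^ a)
    | succ b hab ih =>
      rw [hssucc, show s b + d b - s a = (s b - s a) + d b from by ring]
      refine add_mem ih (Ideal.pow_le_pow_right hab ?_)
      exact (Ideal.pow_right_mono le_sup_right b) (hdP b)
  obtain ⟨x, hx⟩ := limit_exists hcomplete hcauchy
  have hxI : x ∈ I ^ (m0+2) := by
    apply hclosed
    intro n
    have h1 : x - s (n + (m0+2)) ∈ JP ^ (n + (m0+2)) := hx _
    have h2 : JP ^ (n + (m0+2)) ≤ I ^ (m0+2) ⊔ Ideal.span {(p : A)} ^ n :=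
      JP_pow_le I (m0+2) n _ (by omega)
    obtain ⟨y1, hy1, y2, hy2, hsum⟩ := Submodule.mem_sup.mp (h2 h1)
    refine ⟨s (n + (m0+2)) + y1, add_mem (hsI (n + (m0+2))) hy1, ?_⟩
    rw [show x - (s (n + (m0+2)) + y1) = y2 from by linear_combination -hsum]
    exact hy2
  have hinv : ∀ n, s (n+1) - D.δ (s (n+1)) - c + D.δ (d n) ∈ I ^ (m0+3) := by
    intro n; induction n with
    | zero =>
      have hs0 : s 0 = 0 := rfl
      rw [hssucc 0, hd0, hs0, zero_add]
      rw [show c - D.δ c - c + D.δ c = (0 : A) from by ring]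
      exact zero_mem _
    | succ n ih =>
      have hdefect := delta_add_defect D (s (n+1)) (d (n+1))
      have hdefI : D.δ (s (n+1) + d (n+1)) - D.δ (s (n+1)) - D.δ (d (n+1)) ∈ I ^ (m0+3) := by
        refine (Ideal.span_singleton_le_iff_mem _).mpr ?_ hdefect
        exact mul_mem_pow (by omega) (hsI (n+1)) (hdI (n+1))
      rw [hssucc (n+1)]
      rw [show s (n+1) + d (n+1) - D.δ (s (n+1) + d (n+1)) - c + D.δ (d (n+1))
          = (s (n+1) - D.δ (s (n+1)) - c + D.δ (d n)) - (D.δ (d n) - d (n+1))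
            - (D.δ (s (n+1) + d (n+1)) - D.δ (s (n+1)) - D.δ (d (n+1))) from by ring]
      exact sub_mem (sub_mem ih (hddelta n)) hdefI
  refine ⟨x, hxI, ?_⟩
  apply hclosed (m0+3)
  intro n
  set N := n + m0 + 4 with hNdef
  have hj : x - s (N+1) ∈ JP ^ (N+1) := hx _
  have hjN : x - s (N+1) ∈ JP ^ N := Ideal.pow_le_pow_right (by omega) hj
  have hδj : D.δ (x - s (N+1)) ∈ JP ^ N := by
    simpa using delta_mem_JP hp D I (N+1) _ hj
  have hδxdef : D.δ x - D.δ (s (N+1)) - D.δ (x - s (N+1)) ∈ JP ^ N := by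
    have h := delta_add_defect D (s (N+1)) (x - s (N+1))
    rw [show s (N+1) + (x - s (N+1)) = x from by ring] at h
    refine (Ideal.span_singleton_le_iff_mem _).mpr ?_ h
    exact Ideal.mul_mem_left _ _ hjN
  have hW : x - s (N+1) - (D.δ x - D.δ (s (N+1)) - D.δ (x - s (N+1))) - D.δ (x - s (N+1))
      ∈ JP ^ N := sub_mem (sub_mem hjN hδxdef) hδj
  have hsplit : JP ^ N ≤ I ^ (m0+3) ⊔ Ideal.span {(p : A)} ^ n :=
    JP_pow_le I (m0+3) n N (by omega)
  obtain ⟨w1, hw1, w2, hw2, hwsum⟩ := Submodule.mem_sup.mp (hsplit hW)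
  have hδdN := delta_scaled hp D I hδ m0 N (Submodule.mem_sup_left (hdmem N))
  obtain ⟨q, hq, i2, hi2, hqsum⟩ := Submodule.mem_sup.mp hδdN
  have hqP : q ∈ Ideal.span {(p : A)} ^ n := by
    have h1 : q ∈ Ideal.span {(p : A)} ^ (N+1) := by
      rw [Ideal.span_singleton_pow]
      exact Ideal.mul_le_left hq
    exact Ideal.pow_le_pow_right (by omega) h1
  refine ⟨(s (N+1) - D.δ (s (N+1)) - c + D.δ (d N)) - i2 + w1,
    add_mem (sub_mem (hinv N) hi2) hw1, ?_⟩
  rw [show x - D.δ x - c - ((s (N+1) - D.δ (s (N+1)) - c + D.δ (d N)) - i2 + w1)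
      = w2 - q from by linear_combination hqsum - hwsum]
  exact sub_mem hw2 hqP


theorem inj_step (hp : p.Prime) (D : DeltaRing p A) (I : Ideal A)
    (hδ : ∀ a ∈ I, D.δ a ∈ I)
    (hclosed : ∀ (m : ℕ) (x : A),
      (∀ n : ℕ, ∃ y ∈ I ^ m, x - y ∈ Ideal.span {(p : A)} ^ n) → x ∈ I ^ m)
    (m0 : ℕ) {x : A} (hx : x ∈ I ^ (m0+2)) (h1 : D.δ (1 + x) = 0) : x ∈ I ^ (m0+3) := by
  have hfix : x - D.δ x ∈ I ^ (m0+3) := by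
    have h := delta_one_add_defect hp D x
    rw [h1] at h
    have hxx : Ideal.span {x * x} ≤ I ^ (m0+3) :=
      (Ideal.span_singleton_le_iff_mem _).mpr (mul_mem_pow (by omega) hx hx)
    have h2 := hxx h
    rw [show (0 : A) - D.δ x + x = x - D.δ x from by ring] at h2
    exact h2
  have hk : ∀ k, x ∈ Ideal.span {(p : A) ^ k} * I ^ (m0+2) ⊔ I ^ (m0+3) := by
    intro k; induction k with
    | zero =>
      exact Submodule.mem_sup_left
        (by simpa [pow_zero, Ideal.span_singleton_one, Ideal.top_mul] using hx)
    | succ k ih =>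
      have hδx := delta_scaled hp D I hδ m0 k ih
      rw [show x = D.δ x + (x - D.δ x) from by ring]
      exact add_mem hδx (Submodule.mem_sup_right hfix)
  apply hclosed (m0+3)
  intro n
  obtain ⟨sP, hs, iP, hi, hsum⟩ := Submodule.mem_sup.mp (hk n)
  obtain ⟨z, hz, rfl⟩ := Ideal.mem_span_singleton_mul.mp hs
  refine ⟨iP, hi, ?_⟩
  rw [show x - iP = (p : A) ^ n * z from by linear_combination -hsum]
  rw [Ideal.span_singleton_pow]
  exact Ideal.mem_span_singleton.mpr (dvd_mul_right _ _)

theorem inj_zero (hp : p.Prime) (D : DeltaRing p A) (I : Ideal A)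
    (hδ : ∀ a ∈ I, D.δ a ∈ I)
    (hcomplete : IsAdicComplete (I ⊔ Ideal.span {(p : A)}) A)
    (hclosed : ∀ (m : ℕ) (x : A),
      (∀ n : ℕ, ∃ y ∈ I ^ m, x - y ∈ Ideal.span {(p : A)} ^ n) → x ∈ I ^ m)
    {x : A} (hx : x ∈ I ^ 2) (h1 : D.δ (1 + x) = 0) : x = 0 := by
  have hall : ∀ m0, x ∈ I ^ (m0+2) := by
    intro m0; induction m0 with
    | zero => exact hx
    | succ m ih => exact inj_step hp D I hδ hclosed m ih h1
  apply eq_zero_of_mem_all hcomplete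
  intro n
  exact Ideal.pow_le_pow_right (by omega) ((Ideal.pow_right_mono le_sup_left (n+2)) (hall n))

theorem delta_inv (D : DeltaRing p A) (u : Aˣ) (hu : D.δ (u : A) = 0) :
    D.δ ((u⁻¹ : Aˣ) : A) = 0 := by
  have h := D.delta_mul (u : A) ((u⁻¹ : Aˣ) : A)
  rw [hu] at h
  have h1 : ((u : A) * ((u⁻¹ : Aˣ) : A)) = 1 := by
    rw [← Units.val_mul, mul_inv_cancel, Units.val_one]
  rw [h1, D.delta_one] at h
  have h2 : (u : A) ^ p * D.δ (((u⁻¹ : Aˣ) : A)) = 0 := by linear_combination -h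
  have h3 : ((u⁻¹ : Aˣ) : A) ^ p * ((u : A) ^ p) = 1 := by
    rw [← mul_pow, ← Units.val_mul, inv_mul_cancel, Units.val_one, one_pow]
  calc D.δ ((u⁻¹ : Aˣ) : A)
      = (((u⁻¹ : Aˣ) : A) ^ p * ((u : A) ^ p)) * D.δ ((u⁻¹ : Aˣ) : A) := by rw [h3, one_mul]
    _ = ((u⁻¹ : Aˣ) : A) ^ p * ((u : A) ^ p * D.δ ((u⁻¹ : Aˣ) : A)) := by ring
    _ = 0 := by rw [h2, mul_zero]

theorem surj_step (hp : p.Prime) (D : DeltaRing p A) (I : Ideal A)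
    (hδ : ∀ a ∈ I, D.δ a ∈ I)
    (hcomplete : IsAdicComplete (I ⊔ Ideal.span {(p : A)}) A)
    (hclosed : ∀ (m : ℕ) (x : A),
      (∀ n : ℕ, ∃ y ∈ I ^ m, x - y ∈ Ideal.span {(p : A)} ^ n) → x ∈ I ^ m)
    (m0 : ℕ) (u : Aˣ) (hu : D.δ (u : A) ∈ I ^ (m0+2)) :
    ∃ x ∈ I ^ (m0+2), D.δ ((u : A) * (1 + x)) ∈ I ^ (m0+3) := by
  set c : A := ((u⁻¹ : Aˣ) : A) ^ p * D.δ (u : A) with hc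
  have hcI : c ∈ I ^ (m0+2) := Ideal.mul_mem_left _ _ hu
  obtain ⟨x, hxI, hxfix⟩ := solver hp D I hδ hcomplete hclosed m0 c hcI
  refine ⟨x, hxI, ?_⟩
  have hone := delta_one_add_defect hp D x
  have hxx : D.δ (1 + x) - D.δ x + x ∈ I ^ (m0+3) :=
    (Ideal.span_singleton_le_iff_mem _).mpr (mul_mem_pow (by omega) hxI hxI) hone
  obtain ⟨t, ht⟩ : (x : A) ∣ (1 + x) ^ p - 1 := by
    simpa using sub_dvd_pow_sub_pow (1 + x) 1 p
  have hδ1x : D.δ (1 + x) ∈ I ^ (m0+2) := by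
    rw [show D.δ (1 + x) = (D.δ (1 + x) - D.δ x + x) - (x - D.δ x - c) - c from by ring]
    exact sub_mem (sub_mem (Ideal.pow_le_pow_right (by omega) hxx)
      (Ideal.pow_le_pow_right (by omega) hxfix)) hcI
  have hup : (u : A) ^ p * ((u⁻¹ : Aˣ) : A) ^ p = 1 := by
    rw [← mul_pow, ← Units.val_mul, mul_inv_cancel, Units.val_one, one_pow]
  rw [D.delta_mul]
  have key : (u : A) ^ p * D.δ (1 + x) + (1 + x) ^ p * D.δ (u : A)
        + (p : A) * D.δ (u : A) * D.δ (1 + x)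
      = (u : A) ^ p * ((D.δ (1 + x) - D.δ x + x) - (x - D.δ x - c))
        + x * (t * D.δ (u : A)) + (p : A) * (D.δ (u : A) * D.δ (1 + x)) := by
    rw [hc]
    linear_combination D.δ ((u : A)) * ht - D.δ ((u : A)) * hup
  rw [key]
  refine add_mem (add_mem ?_ ?_) ?_
  · exact Ideal.mul_mem_left _ _ (sub_mem hxx hxfix)
  · exact mul_mem_pow (by omega) hxI (Ideal.mul_mem_left _ _ hu)
  · exact Ideal.mul_mem_left _ _ (mul_mem_pow (by omega) hu hδ1x)

end DeltaAux

/-- Let `A` be a δ_p-ring and `I` a δ_p-ideal such that `A` is classically `(I,p)`-complete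
and all powers `I^m` are closed in the `p`-adic topology.  Then the quotient map
`A → A/I²` induces an isomorphism on rank 1 units (units killed by δ_p). -/
theorem rankOneUnits_iso_mod_sq {p : ℕ} (hp : p.Prime) {A : Type*} [CommRing A]
    (D : DeltaRing p A) (I : Ideal A)
    (hδ : ∀ a ∈ I, D.δ a ∈ I)
    (hcomplete : IsAdicComplete (I ⊔ Ideal.span {(p : A)}) A)
    (hclosed : ∀ (m : ℕ) (x : A),
      (∀ n : ℕ, ∃ y ∈ I ^ m, x - y ∈ Ideal.span {(p : A)} ^ n) → x ∈ I ^ m)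
    (D' : DeltaRing p (A ⧸ I ^ 2))
    (hcompat : ∀ x : A,
      D'.δ (Ideal.Quotient.mk (I ^ 2) x) = Ideal.Quotient.mk (I ^ 2) (D.δ x)) :
    (∀ u₁ u₂ : Aˣ, D.δ (u₁ : A) = 0 → D.δ (u₂ : A) = 0 →
        Ideal.Quotient.mk (I ^ 2) (u₁ : A) = Ideal.Quotient.mk (I ^ 2) (u₂ : A) →
        u₁ = u₂) ∧
    (∀ v : (A ⧸ I ^ 2)ˣ, D'.δ (v : A ⧸ I ^ 2) = 0 →
        ∃ u : Aˣ, D.δ (u : A) = 0 ∧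
          Ideal.Quotient.mk (I ^ 2) (u : A) = (v : A ⧸ I ^ 2)) := by
  have hIJP : I ≤ I ⊔ Ideal.span {(p : A)} := le_sup_left
  have hI2JP : I ^ 2 ≤ I ⊔ Ideal.span {(p : A)} :=
    le_trans (Ideal.pow_le_self two_ne_zero) hIJP
  constructor
  · -- injectivity
    intro u₁ u₂ h1 h2 heq
    have hδiv := DeltaAux.delta_inv D u₁ h1
    have hδprod : D.δ ((u₂ : A) * ((u₁⁻¹ : Aˣ) : A)) = 0 := by
      rw [D.delta_mul, h2, hδiv]; ring
    have hui : (u₁ : A) * ((u₁⁻¹ : Aˣ) : A) = 1 := by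
      rw [← Units.val_mul, mul_inv_cancel, Units.val_one]
    have hsub : (u₁ : A) - (u₂ : A) ∈ I ^ 2 := Ideal.Quotient.eq.mp heq
    have hxmem : (u₂ : A) * ((u₁⁻¹ : Aˣ) : A) - 1 ∈ I ^ 2 := by
      rw [show (u₂ : A) * ((u₁⁻¹ : Aˣ) : A) - 1
          = -(((u₁ : A) - (u₂ : A)) * ((u₁⁻¹ : Aˣ) : A)) from by linear_combination hui]
      exact neg_mem (Ideal.mul_mem_right _ _ hsub)
    have hzero : (u₂ : A) * ((u₁⁻¹ : Aˣ) : A) - 1 = 0 := by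
      refine DeltaAux.inj_zero hp D I hδ hcomplete hclosed hxmem ?_
      rw [show (1 : A) + ((u₂ : A) * ((u₁⁻¹ : Aˣ) : A) - 1)
          = (u₂ : A) * ((u₁⁻¹ : Aˣ) : A) from by ring]
      exact hδprod
    have hone : u₂ * u₁⁻¹ = 1 := by
      ext
      rw [Units.val_mul, Units.val_one]
      linear_combination hzero
    exact (mul_inv_eq_one.mp hone).symm
  · -- surjectivity
    intro v hv
    haveI := hcomplete
    have hjac : I ⊔ Ideal.span {(p : A)} ≤ (⊥ : Ideal A).jacobson :=
      IsAdicComplete.le_jacobson_bot _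
    have hunit1 : ∀ e ∈ I ⊔ Ideal.span {(p : A)}, IsUnit (1 + e) := by
      intro e he
      have := Ideal.mem_jacobson_bot.mp (hjac he) 1
      rwa [mul_one, add_comm] at this
    obtain ⟨a, ha⟩ := Ideal.Quotient.mk_surjective (v : A ⧸ I ^ 2)
    obtain ⟨b, hb⟩ := Ideal.Quotient.mk_surjective ((v⁻¹ : (A ⧸ I ^ 2)ˣ) : A ⧸ I ^ 2)
    have hab : a * b - 1 ∈ I ^ 2 := by
      refine Ideal.Quotient.eq.mp ?_
      rw [map_mul, ha, hb, map_one, ← Units.val_mul, mul_inv_cancel, Units.val_one]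
    have hua : IsUnit a := by
      refine isUnit_of_mul_isUnit_left (y := b) ?_
      rw [show a * b = 1 + (a * b - 1) from by ring]
      exact hunit1 _ (hI2JP hab)
    have hδa : D.δ a ∈ I ^ 2 := by
      rw [← Ideal.Quotient.eq_zero_iff_mem, ← hcompat, ha]
      exact hv
    -- the successive-correction sequence
    have hstep : ∀ (n : ℕ) (w : A), ∃ x : A,
        IsUnit w → D.δ w ∈ I ^ (n+2) → x ∈ I ^ (n+2) ∧ D.δ (w * (1 + x)) ∈ I ^ (n+3) := by
      intro n w
      by_cases h : IsUnit w ∧ D.δ w ∈ I ^ (n+2)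
      · obtain ⟨hw, hδw⟩ := h
        obtain ⟨x, h1, h2⟩ := DeltaAux.surj_step hp D I hδ hcomplete hclosed n hw.unit
          (by rw [hw.unit_spec]; exact hδw)
        rw [hw.unit_spec] at h2
        exact ⟨x, fun _ _ => ⟨h1, h2⟩⟩
      · exact ⟨0, fun h1 h2 => absurd ⟨h1, h2⟩ h⟩
    choose X hX using hstep
    set f : ℕ → A := fun n => Nat.rec a (fun n w => w * (1 + X n w)) n with hfdef
    have hf0 : f 0 = a := rfl
    have hfs : ∀ n, f (n+1) = f n * (1 + X n (f n)) := fun n => rfl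
    have hfprop : ∀ n, IsUnit (f n) ∧ D.δ (f n) ∈ I ^ (n+2) := by
      intro n; induction n with
      | zero => exact ⟨hua, hδa⟩
      | succ n ih =>
        obtain ⟨h1, h2⟩ := ih
        obtain ⟨hx, hδ'⟩ := hX n (f n) h1 h2
        refine ⟨?_, by rw [hfs]; exact hδ'⟩
        rw [hfs]
        exact h1.mul (hunit1 _ (hIJP (Ideal.pow_le_self (by omega) hx)))
    have hfdiff : ∀ n, f (n+1) - f n ∈ I ^ (n+2) := by
      intro n
      have hx := (hX n (f n) (hfprop n).1 (hfprop n).2).1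
      rw [hfs, show f n * (1 + X n (f n)) - f n = f n * X n (f n) from by ring]
      exact Ideal.mul_mem_left _ _ hx
    have hcauchyI : ∀ {n n' : ℕ}, n ≤ n' → f n' - f n ∈ I ^ (n+2) := by
      intro n n' h
      induction n', h using Nat.le_induction with
      | base => simpa using zero_mem (I ^ (n+2))
      | succ n' hnn ih =>
        rw [show f (n'+1) - f n = (f (n'+1) - f n') + (f n' - f n) from by ring]
        exact add_mem (Ideal.pow_le_pow_right (by omega) (hfdiff n')) ih
    have hcauchy : ∀ {n n' : ℕ}, n ≤ n' → f n' - f n ∈ (I ⊔ Ideal.span {(p : A)}) ^ n :=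
      fun h => Ideal.pow_le_pow_right (by omega)
        ((Ideal.pow_right_mono le_sup_left _) (hcauchyI h))
    obtain ⟨L, hL⟩ := DeltaAux.limit_exists hcomplete hcauchy
    have hδL : D.δ L = 0 := by
      apply DeltaAux.eq_zero_of_mem_all hcomplete
      intro n
      have hj : L - f (n+1) ∈ (I ⊔ Ideal.span {(p : A)}) ^ (n+1) := hL (n+1)
      have hjn : L - f (n+1) ∈ (I ⊔ Ideal.span {(p : A)}) ^ n :=
        Ideal.pow_le_pow_right (by omega) hj
      have hδj : D.δ (L - f (n+1)) ∈ (I ⊔ Ideal.span {(p : A)}) ^ n := by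
        simpa using DeltaAux.delta_mem_JP hp D I (n+1) _ hj
      have hdef : D.δ L - D.δ (f (n+1)) - D.δ (L - f (n+1))
          ∈ (I ⊔ Ideal.span {(p : A)}) ^ n := by
        have h := DeltaAux.delta_add_defect D (f (n+1)) (L - f (n+1))
        rw [show f (n+1) + (L - f (n+1)) = L from by ring] at h
        exact (Ideal.span_singleton_le_iff_mem _).mpr (Ideal.mul_mem_left _ _ hjn) h
      have hδf : D.δ (f (n+1)) ∈ (I ⊔ Ideal.span {(p : A)}) ^ n :=
        Ideal.pow_le_pow_right (by omega)
          ((Ideal.pow_right_mono le_sup_left _) ((hfprop (n+1)).2))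
      rw [show D.δ L = (D.δ L - D.δ (f (n+1)) - D.δ (L - f (n+1)))
          + D.δ (f (n+1)) + D.δ (L - f (n+1)) from by ring]
      exact add_mem (add_mem hdef hδf) hδj
    have hLa : L - a ∈ I ^ 2 := by
      apply hclosed 2
      intro n
      have h1 : L - f (n+2) ∈ (I ⊔ Ideal.span {(p : A)}) ^ (n+2) := hL (n+2)
      have h2 : (I ⊔ Ideal.span {(p : A)}) ^ (n+2) ≤ I ^ 2 ⊔ Ideal.span {(p : A)} ^ n :=
        DeltaAux.JP_pow_le I 2 n (n+2) (by omega)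
      obtain ⟨y1, hy1, y2, hy2, hsum⟩ := Submodule.mem_sup.mp (h2 h1)
      have h3 : f (n+2) - a ∈ I ^ 2 := by
        have h4 := hcauchyI (n := 0) (n' := n+2) (by omega)
        rwa [hf0] at h4
      refine ⟨y1 + (f (n+2) - a), add_mem hy1 h3, ?_⟩
      rw [show L - a - (y1 + (f (n+2) - a)) = y2 from by linear_combination -hsum]
      exact hy2
    have hLu : IsUnit L := by
      obtain ⟨ua, hua'⟩ := hua
      have h1 : (ua : A) * ((ua⁻¹ : Aˣ) : A) = 1 := by
        rw [← Units.val_mul, mul_inv_cancel, Units.val_one]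
      have hL' : L = (ua : A) * (1 + ((ua⁻¹ : Aˣ) : A) * (L - a)) := by
        linear_combination -(L - a) * h1 - hua'
      rw [hL']
      exact (Units.isUnit ua).mul
        (hunit1 _ (Ideal.mul_mem_left _ _ (hI2JP hLa)))
    obtain ⟨uL, huL⟩ := hLu
    refine ⟨uL, by rw [huL]; exact hδL, ?_⟩
    rw [huL, ← ha]
    exact Ideal.Quotient.eq.mpr hLa
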